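/- arXiv:1711.04001 — 2 statements merged into one kernel-verified Lean document; each statement's English description precedes it below -/
import Mathlib

section
/- Let T be a hierarchical data tree, R a table, and i a column index. The automaton A = ConstructDFA(T,R,i) accepts a column extraction program π if and only if π overapproximates column(R,i) on T, i.e., every value in column(R,i) equals n.data for some node n ∈ [[π]]_{{root(T)},T}. -/
/-- A hierarchical data tree (HDT): a finite rooted tree in which every node
carries a tag, a position (it is the pos'th child with its tag under its
parent), and a data value. -/
structure HDT where
  /-- the (finite) type of nodes -/
  Node : Type
  fintypeNode : Fintype Node
  root : Node
  parent : Node → Option Node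
  tag : Node → String
  pos : Node → Nat
  data : Node → String
  parent_root : parent root = none
  parent_isSome : ∀ n, n ≠ root → (parent n).isSome
  reaches_root : ∀ n, Relation.ReflTransGen (fun c p => parent c = some p) n root
  pos_unique : ∀ a b p, parent a = some p → parent b = some p →
    tag a = tag b → pos a = pos b → a = b

/-- `c` is a child of `p`. -/
def HDT.IsChildOf (T : HDT) (c p : T.Node) : Prop := T.parent c = some p

/-- `d` is a strict descendant of `a`. -/
def HDT.IsDescOf (T : HDT) (d a : T.Node) : Prop := Relation.TransGen T.IsChildOf d a

/-- a leaf is a node with no children. -/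
def HDT.IsLeaf (T : HDT) (n : T.Node) : Prop := ∀ c, ¬ T.IsChildOf c n

/-- Column extraction programs:
`π ::= s | children(π,tag) | pchildren(π,tag,pos) | descendants(π,tag)`. -/
inductive ColProg where
  | id : ColProg
  | children : ColProg → String → ColProg
  | pchildren : ColProg → String → Nat → ColProg
  | descendants : ColProg → String → ColProg

/-- Semantics `[[π]]_{s,T}` of column extraction programs. -/
def evalCol (T : HDT) : ColProg → Set T.Node → Set T.Node
  | .id, s => s
  | .children π tg, s => {c | ∃ p ∈ evalCol T π s, T.IsChildOf c p ∧ T.tag c = tg}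
  | .pchildren π tg i, s =>
      {c | ∃ p ∈ evalCol T π s, T.IsChildOf c p ∧ T.tag c = tg ∧ T.pos c = i}
  | .descendants π tg, s => {d | ∃ a ∈ evalCol T π s, T.IsDescOf d a ∧ T.tag d = tg}

/-- A table with `k` columns: a finite set of `k`-tuples of data values. -/
abbrev Table (k : ℕ) := Finset (Fin k → String)

/-- `column(R,i)`: the set of values occurring in the i'th component of rows of `R`. -/
def tableColumn {k : ℕ} (R : Table k) (i : Fin k) : Set String := {v | ∃ r ∈ R, r i = v}

/-- `π` overapproximates `column(R,i)` on `T`: every value of the column is the data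
of some node extracted by `π` from `{root(T)}`. -/
def Overapprox (T : HDT) {k : ℕ} (R : Table k) (i : Fin k) (π : ColProg) : Prop :=
  ∀ v ∈ tableColumn R i, ∃ n ∈ evalCol T π {T.root}, T.data n = v
/-- The alphabet Σ of the constructed DFA: one symbol per column-extraction
operator (instantiated with a tag and, for `pchildren`, a position). -/
inductive ColSym where
  | children (tag : String)
  | pchildren (tag : String) (pos : Nat)
  | descendants (tag : String)

/-- The result of applying the operator named by a symbol to a set of nodes of `T`. -/
def applySym (T : HDT) (s : Set T.Node) : ColSym → Set T.Node
  | .children tg => {c | ∃ p ∈ s, T.IsChildOf c p ∧ T.tag c = tg}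
  | .pchildren tg i => {c | ∃ p ∈ s, T.IsChildOf c p ∧ T.tag c = tg ∧ T.pos c = i}
  | .descendants tg => {d | ∃ a ∈ s, T.IsDescOf d a ∧ T.tag d = tg}

/-- Applying the operators of a word in order, starting from `{root(T)}`. -/
def runWord (T : HDT) (w : List ColSym) : Set T.Node := w.foldl (applySym T) {T.root}

/-- The sets of nodes reachable from `{root(T)}` by repeatedly applying operators;
these are exactly the states of the constructed DFA. -/
def ReachableSet (T : HDT) (s : Set T.Node) : Prop := ∃ w : List ColSym, runWord T w = s

/-- The column extraction program `π_w` corresponding to a word `w`. -/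
def progOfWord (w : List ColSym) : ColProg :=
  w.foldl (fun π f =>
    match f with
    | .children tg => .children π tg
    | .pchildren tg i => .pchildren π tg i
    | .descendants tg => .descendants π tg) .id

/-- The word of operator symbols corresponding to a column extraction program. -/
def wordOfProg : ColProg → List ColSym
  | .id => []
  | .children π tg => wordOfProg π ++ [.children tg]
  | .pchildren π tg i => wordOfProg π ++ [.pchildren tg i]
  | .descendants π tg => wordOfProg π ++ [.descendants tg]

/-- A state `q_s` is accepting iff every value of `column(R,i)` equals the data
of some node in `s`. -/
def AcceptSet (T : HDT) {k : ℕ} (R : Table k) (i : Fin k) (s : Set T.Node) : Prop :=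
  ∀ v ∈ tableColumn R i, ∃ n ∈ s, T.data n = v

/-- `ConstructDFA(T,R,i)`: states are the reachable sets of nodes of `T`, the start
state is `q_{{root(T)}}`, the transition on symbol `f` applies the corresponding
operator, and `q_s` is accepting iff `s` overapproximates `column(R,i)`. -/
def constructDFA (T : HDT) {k : ℕ} (R : Table k) (i : Fin k) :
    DFA ColSym {s : Set T.Node // ReachableSet T s} where
  step := fun q f =>
    ⟨applySym T q.1 f, by
      obtain ⟨w, hw⟩ := q.2
      refine ⟨w ++ [f], ?_⟩
      simp only [runWord, List.foldl_append, List.foldl_cons, List.foldl_nil] at hw ⊢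
      rw [hw]⟩
  start := ⟨{T.root}, ⟨[], rfl⟩⟩
  accept := {q | AcceptSet T R i q.1}

/-- The product (intersection) automaton of a family of DFAs over a common alphabet:
states are tuples of component states, and a tuple is accepting iff every
component is accepting. -/
def productDFA {m : ℕ} {σ : Fin m → Type} (A : ∀ j, DFA ColSym (σ j)) :
    DFA ColSym (∀ j, σ j) where
  step := fun q f j => (A j).step (q j) f
  start := fun j => (A j).start
  accept := {q | ∀ j, q j ∈ (A j).accept}

lemma evalFrom_fst (T : HDT) {k : ℕ} (R : Table k) (i : Fin k)
    (w : List ColSym) : ∀ q, ((constructDFA T R i).evalFrom q w).1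
      = w.foldl (applySym T) q.1 := by
  induction w with
  | nil => intro q; rfl
  | cons f w ih => intro q; exact ih _

lemma foldl_wordOfProg (T : HDT) (π : ColProg) :
    ∀ s, (wordOfProg π).foldl (applySym T) s = evalCol T π s := by
  induction π with
  | id => intro s; rfl
  | children π tg ih =>
      intro s; simp [wordOfProg, List.foldl_append, ih, evalCol, applySym]
  | pchildren π tg j ih =>
      intro s; simp [wordOfProg, List.foldl_append, ih, evalCol, applySym]
  | descendants π tg ih =>
      intro s; simp [wordOfProg, List.foldl_append, ih, evalCol, applySym]

/-- The automaton `A = ConstructDFA(T,R,i)` accepts a column extraction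
program `π` if and only if `π` overapproximates `column(R,i)` on `T`, i.e. every
value in `column(R,i)` equals `n.data` for some node `n ∈ [[π]]_{{root(T)},T}`. -/
theorem constructDFA_accepts_iff_overapprox
    (T : HDT) {k : ℕ} (R : Table k) (i : Fin k) (π : ColProg) :
    wordOfProg π ∈ (constructDFA T R i).accepts ↔ Overapprox T R i π := by
  have h : ((constructDFA T R i).evalFrom (constructDFA T R i).start (wordOfProg π)).1
      = evalCol T π {T.root} := by
    rw [evalFrom_fst]; exact foldl_wordOfProg T π _
  constructor
  · intro hacc v hv
    have := hacc v hv
    rwa [h] at this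
  · intro hov
    show AcceptSet T R i _
    rw [h]; exact hov
end

section
/- Let α be a type, E+ and E− finite subsets of α, and P a finite set of predicates p : α → Bool. Suppose some Boolean combination of P is true on every element of E+ and false on every element of E−. Then the minimum, over all Boolean combinations F of P that are true on all of E+ and false on all of E−, of the number of distinct predicates of P occurring in F equals the minimum cardinality of a subset S ⊆ P that distinguishes every pair in E+ × E−; moreover a minimizing F can be chosen in disjunctive normal form over a minimum distinguishing subset. -/
/-- Boolean formulas over `N` predicate variables: Boolean combinations built with
conjunction, disjunction and negation (with the constant combinations included). -/
inductive BF (N : ℕ) where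
  | tt : BF N
  | ff : BF N
  | var (k : Fin N) : BF N
  | not (f : BF N) : BF N
  | and (f g : BF N) : BF N
  | or (f g : BF N) : BF N

/-- Evaluation of a Boolean formula on a valuation of the variables. -/
def BF.evalBF {N : ℕ} : BF N → (Fin N → Bool) → Bool
  | .tt, _ => true
  | .ff, _ => false
  | .var k, v => v k
  | .not f, v => ! f.evalBF v
  | .and f g, v => f.evalBF v && g.evalBF v
  | .or f g, v => f.evalBF v || g.evalBF v

/-- The set of (indices of) predicates of `P` occurring in a Boolean combination. -/
def BF.vars {N : ℕ} : BF N → Finset (Fin N)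
  | .tt => ∅
  | .ff => ∅
  | .var k => {k}
  | .not f => f.vars
  | .and f g => f.vars ∪ g.vars
  | .or f g => f.vars ∪ g.vars

/-- Literals: variables and their negations. -/
inductive BF.IsLit {N : ℕ} : BF N → Prop
  | var (k : Fin N) : BF.IsLit (.var k)
  | nvar (k : Fin N) : BF.IsLit (.not (.var k))

/-- Finite conjunctions of literals. -/
inductive BF.IsConj {N : ℕ} : BF N → Prop
  | tt : BF.IsConj .tt
  | lit {f : BF N} : BF.IsLit f → BF.IsConj f
  | and {f g : BF N} : BF.IsConj f → BF.IsConj g → BF.IsConj (.and f g)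

/-- Disjunctive normal form: a finite disjunction of finite conjunctions of
predicates and their negations. -/
inductive BF.IsDNF {N : ℕ} : BF N → Prop
  | ff : BF.IsDNF .ff
  | conj {f : BF N} : BF.IsConj f → BF.IsDNF f
  | or {f g : BF N} : BF.IsDNF f → BF.IsDNF g → BF.IsDNF (.or f g)

/-- `F` is true on every element of `E⁺` and false on every element of `E⁻`. -/
def SeparatesBF {α : Type*} {N : ℕ} (Ep En : Finset α) (P : Fin N → α → Bool)
    (F : BF N) : Prop :=
  (∀ e ∈ Ep, F.evalBF (fun k => P k e) = true) ∧
  (∀ e ∈ En, F.evalBF (fun k => P k e) = false)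

/-- The subset `S` of predicates distinguishes every pair in `E⁺ × E⁻`. -/
def DistinguishesIdx {α : Type*} {N : ℕ} (Ep En : Finset α) (P : Fin N → α → Bool)
    (S : Finset (Fin N)) : Prop :=
  ∀ ep ∈ Ep, ∀ en ∈ En, ∃ k ∈ S, P k ep ≠ P k en

namespace BFAux

variable {N : ℕ}

theorem eval_congr (F : BF N) {v w : Fin N → Bool}
    (h : ∀ k ∈ F.vars, v k = w k) : F.evalBF v = F.evalBF w := by
  induction F with
  | tt => rfl
  | ff => rfl
  | var k => exact h k (by simp [BF.vars])
  | not f ih => simp [BF.evalBF, ih h]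
  | and f g ihf ihg =>
      simp only [BF.evalBF, BF.vars] at *
      rw [ihf fun k hk => h k (Finset.mem_union_left _ hk),
          ihg fun k hk => h k (Finset.mem_union_right _ hk)]
  | or f g ihf ihg =>
      simp only [BF.evalBF, BF.vars] at *
      rw [ihf fun k hk => h k (Finset.mem_union_left _ hk),
          ihg fun k hk => h k (Finset.mem_union_right _ hk)]

def lit (k : Fin N) (b : Bool) : BF N := if b then .var k else .not (.var k)

theorem lit_isConj (k : Fin N) (b : Bool) : BF.IsConj (lit k b) := by
  cases b
  · exact BF.IsConj.lit (BF.IsLit.nvar k)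
  · exact BF.IsConj.lit (BF.IsLit.var k)

theorem lit_eval (k : Fin N) (b : Bool) (w : Fin N → Bool) :
    (lit k b).evalBF w = true ↔ w k = b := by
  cases b <;> simp [lit, BF.evalBF]

theorem lit_vars (k : Fin N) (b : Bool) : (lit k b).vars = {k} := by
  cases b <;> simp [lit, BF.vars]

def conjOf (L : List (Fin N)) (v : Fin N → Bool) : BF N :=
  L.foldr (fun k acc => .and (lit k (v k)) acc) .tt

theorem conjOf_isConj (L : List (Fin N)) (v : Fin N → Bool) :
    BF.IsConj (conjOf L v) := by
  induction L with
  | nil => exact BF.IsConj.tt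
  | cons k L ih => exact BF.IsConj.and (lit_isConj k (v k)) ih

theorem conjOf_vars (L : List (Fin N)) (v : Fin N → Bool) :
    (conjOf L v).vars = L.toFinset := by
  induction L with
  | nil => simp [conjOf, BF.vars]
  | cons k L ih =>
      simp [conjOf, BF.vars, lit_vars] at *
      rw [ih]

theorem conjOf_eval (L : List (Fin N)) (v w : Fin N → Bool) :
    (conjOf L v).evalBF w = true ↔ ∀ k ∈ L, w k = v k := by
  induction L with
  | nil => simp [conjOf, BF.evalBF]
  | cons k L ih =>
      simp only [conjOf, List.foldr_cons, BF.evalBF, Bool.and_eq_true] at *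
      rw [ih, lit_eval]
      constructor
      · rintro ⟨h1, h2⟩ x hx
        rcases List.mem_cons.1 hx with rfl | hx
        · exact h1
        · exact h2 x hx
      · intro h
        exact ⟨h k (List.mem_cons_self), fun x hx => h x (List.mem_cons_of_mem _ hx)⟩

def disjOf (Ls : List (BF N)) : BF N := Ls.foldr .or .ff

theorem disjOf_isDNF (Ls : List (BF N)) (h : ∀ f ∈ Ls, BF.IsConj f) :
    BF.IsDNF (disjOf Ls) := by
  induction Ls with
  | nil => exact BF.IsDNF.ff
  | cons f Ls ih =>
      exact BF.IsDNF.or (BF.IsDNF.conj (h f (List.mem_cons_self)))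
        (ih fun g hg => h g (List.mem_cons_of_mem _ hg))

theorem disjOf_vars_subset (Ls : List (BF N)) (S : Finset (Fin N))
    (h : ∀ f ∈ Ls, f.vars ⊆ S) : (disjOf Ls).vars ⊆ S := by
  induction Ls with
  | nil => simp [disjOf, BF.vars]
  | cons f Ls ih =>
      simp only [disjOf, List.foldr_cons, BF.vars]
      exact Finset.union_subset (h f (List.mem_cons_self))
        (ih fun g hg => h g (List.mem_cons_of_mem _ hg))

theorem disjOf_eval (Ls : List (BF N)) (w : Fin N → Bool) :
    (disjOf Ls).evalBF w = true ↔ ∃ f ∈ Ls, f.evalBF w = true := by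
  induction Ls with
  | nil => simp [disjOf, BF.evalBF]
  | cons f Ls ih =>
      simp only [disjOf, List.foldr_cons, BF.evalBF, Bool.or_eq_true] at *
      rw [ih]; simp

/-- From a distinguishing set, build a separating DNF over it. -/
theorem exists_dnf {α : Type*} (Ep En : Finset α) (P : Fin N → α → Bool)
    (S : Finset (Fin N)) (hS : DistinguishesIdx Ep En P S) :
    ∃ F : BF N, F.IsDNF ∧ F.vars ⊆ S ∧ SeparatesBF Ep En P F := by
  refine ⟨disjOf (Ep.toList.map fun e => conjOf S.toList fun k => P k e), ?_, ?_, ?_, ?_⟩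
  · refine disjOf_isDNF _ ?_
    intro f hf
    simp only [List.mem_map] at hf
    obtain ⟨e, _, rfl⟩ := hf
    exact conjOf_isConj _ _
  · refine disjOf_vars_subset _ _ ?_
    intro f hf
    simp only [List.mem_map] at hf
    obtain ⟨e, _, rfl⟩ := hf
    rw [conjOf_vars]
    intro x hx
    simpa [Finset.mem_toList] using hx
  · intro e he
    rw [disjOf_eval]
    refine ⟨conjOf S.toList fun k => P k e, ?_, ?_⟩
    · exact List.mem_map.2 ⟨e, Finset.mem_toList.2 he, rfl⟩
    · rw [conjOf_eval]; intro k _; rfl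
  · intro e he
    rw [← Bool.not_eq_true, disjOf_eval]
    rintro ⟨f, hf, hev⟩
    simp only [List.mem_map] at hf
    obtain ⟨ep, hep, rfl⟩ := hf
    rw [conjOf_eval] at hev
    obtain ⟨k, hk, hne⟩ := hS ep (Finset.mem_toList.1 hep) e he
    exact hne (hev k (Finset.mem_toList.2 hk)).symm

/-- A separating formula's variables distinguish all pairs. -/
theorem vars_distinguish {α : Type*} (Ep En : Finset α) (P : Fin N → α → Bool)
    (F : BF N) (hF : SeparatesBF Ep En P F) : DistinguishesIdx Ep En P F.vars := by
  intro ep hep en hen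
  by_contra h
  push_neg at h
  have : F.evalBF (fun k => P k ep) = F.evalBF (fun k => P k en) :=
    eval_congr F fun k hk => h k hk
  rw [hF.1 ep hep, hF.2 en hen] at this
  simp at this

end BFAux

/-- Suppose some Boolean combination of `P` is true on all of `E⁺` and
false on all of `E⁻`. Then the minimum, over all such separating Boolean
combinations `F`, of the number of distinct predicates of `P` occurring in `F`
equals the minimum cardinality of a subset `S ⊆ P` that distinguishes every pair in
`E⁺ × E⁻`; moreover a minimizing `F` can be chosen in disjunctive normal form over
a minimum distinguishing subset. -/
theorem min_predicates_of_classifier_eq_min_distinguishing_subset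
    {α : Type*} (Ep En : Finset α) {N : ℕ} (P : Fin N → α → Bool)
    (hsep : ∃ F : BF N, SeparatesBF Ep En P F) :
    sInf {c : ℕ | ∃ F : BF N, SeparatesBF Ep En P F ∧ c = F.vars.card} =
        sInf {c : ℕ | ∃ S : Finset (Fin N), DistinguishesIdx Ep En P S ∧ c = S.card} ∧
      ∃ (S : Finset (Fin N)) (F : BF N),
        DistinguishesIdx Ep En P S ∧
        S.card = sInf {c : ℕ | ∃ S' : Finset (Fin N),
          DistinguishesIdx Ep En P S' ∧ c = S'.card} ∧
        F.IsDNF ∧ F.vars ⊆ S ∧ SeparatesBF Ep En P F ∧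
        F.vars.card = sInf {c : ℕ | ∃ F' : BF N,
          SeparatesBF Ep En P F' ∧ c = F'.vars.card} := by
  set A := {c : ℕ | ∃ F : BF N, SeparatesBF Ep En P F ∧ c = F.vars.card} with hA
  set B := {c : ℕ | ∃ S : Finset (Fin N), DistinguishesIdx Ep En P S ∧ c = S.card} with hB
  obtain ⟨F0, hF0⟩ := hsep
  have hAne : A.Nonempty := ⟨F0.vars.card, F0, hF0, rfl⟩
  have hAsubB : A ⊆ B := by
    rintro c ⟨F, hF, rfl⟩
    exact ⟨F.vars, BFAux.vars_distinguish Ep En P F hF, rfl⟩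
  have hBne : B.Nonempty := ⟨_, hAsubB hAne.choose_spec⟩
  have hBleA : sInf B ≤ sInf A := Nat.sInf_le (hAsubB (Nat.sInf_mem hAne))
  obtain ⟨S, hS, hScard⟩ := Nat.sInf_mem hBne
  obtain ⟨F, hFdnf, hFvars, hFsep⟩ := BFAux.exists_dnf Ep En P S hS
  have hFcard : F.vars.card ≤ S.card := Finset.card_le_card hFvars
  have hAleF : sInf A ≤ F.vars.card := Nat.sInf_le ⟨F, hFsep, rfl⟩
  have hAleB : sInf A ≤ sInf B := le_trans hAleF (hScard ▸ hFcard)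
  have heq : sInf A = sInf B := le_antisymm hAleB hBleA
  refine ⟨heq, S, F, hS, hScard.symm, hFdnf, hFvars, hFsep, ?_⟩
  exact le_antisymm (by omega) hAleF
end
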